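/- Under the setting of the fixNLP Lagrangian, assume additionally that e : ℝ^d → ℝ^k and g : ℝ^d → ℝ^m are quadratic polynomials (so that B(q) = De(q) and G(q) = Dg(q) are affine in q). Let U₂(s) be the constant matrix ∂_q(B(q)ᵀ s), U₁(a) the constant matrix ∂_q(B(q) a) for a ∈ ℝ^d, V(ν) the constant matrix ∂_q(G(q)ᵀ ν), and F(s) = N₀ᵀ( M/Δt + (Δt/4) U₂(s) ). Then the second Fréchet derivative of L at x = (q, e₊, s, λ, μ, ν) applied to directions Δx = (Δq, Δe, Δs, Δλ, Δμ, Δν) and δx = (δq, δe, δs, δλ, δμ, δν) equals δx · S Δx, where S is the symmetric block matrix with blocks S_{qq} = −¼ U₂(λ) + V(ν), S_{qs} = (Δt/4) U₁(N₀ μ)ᵀ, S_{qλ} = −½ B((q_i+q)/2)ᵀ, S_{qμ} = F(s)ᵀ, S_{qν} = G(q)ᵀ, S_{ee} = C, S_{eλ} = I, S_{ss} = C⁻¹, S_{sμ} = (Δt/2) B((q_i+q)/2) N₀, all remaining blocks zero, and the lower-triangular blocks the transposes of the corresponding upper-triangular ones. -/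

import Mathlib

set_option maxHeartbeats 3200000
set_option maxRecDepth 8000

open Matrix

/-- The continuous linear map induced by a matrix. -/
noncomputable def matCLM {d k : ℕ} (A : Matrix (Fin k) (Fin d) ℝ) :
    (Fin d → ℝ) →L[ℝ] (Fin k → ℝ) :=
  LinearMap.toContinuousLinearMap A.mulVecLin

@[simp] lemma matCLM_apply {d k : ℕ} (A : Matrix (Fin k) (Fin d) ℝ) (v : Fin d → ℝ) :
    matCLM A v = A.mulVec v := rfl

noncomputable def dotCLM2 (j : ℕ) : (Fin j → ℝ) →L[ℝ] ((Fin j → ℝ) →L[ℝ] ℝ) :=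
  LinearMap.toContinuousLinearMap
    { toFun := fun v => LinearMap.toContinuousLinearMap
        { toFun := fun w => v ⬝ᵥ w
          map_add' := fun a b => dotProduct_add _ _ _
          map_smul' := fun r a => by simp [dotProduct_smul] }
      map_add' := fun a b => by ext w; simp [add_dotProduct]
      map_smul' := fun r a => by ext w; simp [smul_dotProduct] }

@[simp] lemma dotCLM2_apply {j : ℕ} (v w : Fin j → ℝ) : dotCLM2 j v w = v ⬝ᵥ w := rfl

lemma dot_tmul {a b : ℕ} (A : Matrix (Fin a) (Fin b) ℝ) (v : Fin b → ℝ) (w : Fin a → ℝ) :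
    v ⬝ᵥ Aᵀ.mulVec w = w ⬝ᵥ A.mulVec v := by
  rw [dotProduct_comm, Matrix.dotProduct_mulVec, ← Matrix.mulVec_transpose]

lemma tmul_dot {a b : ℕ} (A : Matrix (Fin a) (Fin b) ℝ) (v : Fin a → ℝ) (w : Fin b → ℝ) :
    Aᵀ.mulVec v ⬝ᵥ w = v ⬝ᵥ A.mulVec w := by
  rw [dotProduct_comm, dot_tmul, dotProduct_comm]

lemma affine_of_const_fderiv {d j : ℕ} {φ : (Fin d → ℝ) → (Fin j → ℝ)}
    {A : Matrix (Fin j) (Fin d) ℝ}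
    (h : ∀ p, HasFDerivAt φ (matCLM A) p) (p : Fin d → ℝ) : φ p = φ 0 + A.mulVec p := by
  have key : ∀ y : Fin d → ℝ, φ y - A.mulVec y = φ 0 - A.mulVec 0 := by
    intro y
    have hdiff : ∀ z : Fin d → ℝ, HasFDerivAt (fun y => φ y - A.mulVec y)
        ((matCLM A) - (matCLM A)) z := by
      intro z
      exact (h z).sub ((matCLM A).hasFDerivAt (x := z))
    exact is_const_of_fderiv_eq_zero
      (fun z => ((hdiff z).differentiableAt))
      (fun z => by rw [(hdiff z).fderiv]; simp) y 0
  have hp := key p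
  rw [Matrix.mulVec_zero, sub_zero] at hp
  exact sub_eq_iff_eq_add.mp hp

lemma quad_scalar {d : ℕ} {ψ : (Fin d → ℝ) → ℝ} {c : Fin d → ℝ}
    {A : Matrix (Fin d) (Fin d) ℝ}
    (h : ∀ p, HasFDerivAt ψ (dotCLM2 d (c + A.mulVec p)) p) (p : Fin d → ℝ) :
    ψ p = ψ 0 + (c ⬝ᵥ p + (1 / 2) * (p ⬝ᵥ A.mulVec p)) := by
  have key : ∀ t : ℝ, HasDerivAt (fun t : ℝ => ψ (t • p))
      (c ⬝ᵥ p + t * (p ⬝ᵥ A.mulVec p)) t := by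
    intro t
    have h1 : HasDerivAt (fun t : ℝ => t • p) p t := by
      simpa using (hasDerivAt_id t).smul_const p
    have h2 := (h (t • p)).comp_hasDerivAt t h1
    refine h2.congr_deriv ?_
    simp [Matrix.mulVec_smul, add_dotProduct, smul_dotProduct, smul_eq_mul,
      dotProduct_comm (A.mulVec p) p]
  have poly : ∀ t : ℝ, HasDerivAt
      (fun t : ℝ => t * (c ⬝ᵥ p) + t ^ 2 / 2 * (p ⬝ᵥ A.mulVec p))
      (c ⬝ᵥ p + t * (p ⬝ᵥ A.mulVec p)) t := by
    intro t
    have ha := (hasDerivAt_id t).mul_const (c ⬝ᵥ p)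
    have hb := (((hasDerivAt_pow 2 t).div_const 2).mul_const (p ⬝ᵥ A.mulVec p))
    have hab := ha.add hb
    refine hab.congr_deriv ?_
    simp
  have zero : ∀ t : ℝ, HasDerivAt
      (fun t : ℝ => ψ (t • p) - (t * (c ⬝ᵥ p) + t ^ 2 / 2 * (p ⬝ᵥ A.mulVec p))) 0 t := by
    intro t
    have hks := (key t).sub (poly t)
    rw [sub_self] at hks
    exact hks
  have hconst := is_const_of_deriv_eq_zero
    (fun t => ((zero t).differentiableAt))
    (fun t => (zero t).deriv) 1 0
  simp only [one_smul, zero_smul, one_pow, one_mul] at hconst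
  norm_num at hconst
  linarith [hconst]

lemma symm_scalar {d : ℕ} {ψ : (Fin d → ℝ) → ℝ} {c : Fin d → ℝ}
    {A : Matrix (Fin d) (Fin d) ℝ}
    (h : ∀ p, HasFDerivAt ψ (dotCLM2 d (c + A.mulVec p)) p) (v w : Fin d → ℝ) :
    A.mulVec v ⬝ᵥ w = A.mulVec w ⬝ᵥ v := by
  have hx : HasFDerivAt (fun p : Fin d → ℝ => dotCLM2 d (c + A.mulVec p))
      ((dotCLM2 d).comp (matCLM A)) 0 := by
    have hf := ((dotCLM2 d).hasFDerivAt (x := c + A.mulVec 0)).comp 0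
      (((matCLM A).hasFDerivAt (x := (0 : Fin d → ℝ))).const_add c)
    simpa [Function.comp_def] using hf
  have := second_derivative_symmetric h hx v w
  simpa [dotProduct_comm] using this

section Master
variable {E A B C : Type*}
  [NormedAddCommGroup E] [NormedSpace ℝ E]
  [NormedAddCommGroup A] [NormedSpace ℝ A]
  [NormedAddCommGroup B] [NormedSpace ℝ B]
  [NormedAddCommGroup C] [NormedSpace ℝ C]

/-- flip as a CLM -/
noncomputable def flipCLM (A C : Type*) [NormedAddCommGroup A] [NormedSpace ℝ A]
    [NormedAddCommGroup C] [NormedSpace ℝ C] :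
    (A →L[ℝ] (C →L[ℝ] ℝ)) →L[ℝ] (C →L[ℝ] (A →L[ℝ] ℝ)) :=
  (ContinuousLinearMap.flipₗᵢ ℝ A C ℝ).toLinearIsometry.toContinuousLinearMap

@[simp] lemma flipCLM_apply (h : A →L[ℝ] (C →L[ℝ] ℝ)) (c : C) (a : A) :
    flipCLM A C h c a = h a c := rfl

/-- precomposition as a CLM -/
noncomputable def precompCLM (U : E →L[ℝ] A) : (A →L[ℝ] ℝ) →L[ℝ] (E →L[ℝ] ℝ) :=
  (ContinuousLinearMap.compL ℝ E A ℝ).flip U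

@[simp] lemma precompCLM_apply (U : E →L[ℝ] A) (g : A →L[ℝ] ℝ) (δ : E) :
    precompCLM U g δ = g (U δ) := rfl

lemma clm_affine {F G : Type*} [NormedAddCommGroup F] [NormedSpace ℝ F]
    [NormedAddCommGroup G] [NormedSpace ℝ G]
    (t : F →L[ℝ] G) (c : F) (T : E →L[ℝ] F) (x : E) :
    HasFDerivAt (fun y : E => t (c + T y)) (t.comp T) x := by
  have h := (t.hasFDerivAt (x := c + T x)).comp x ((T.hasFDerivAt (x := x)).const_add c)
  simpa [Function.comp_def] using h

variable (t : A →L[ℝ] B →L[ℝ] C →L[ℝ] ℝ)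
variable (u₀ : A) (v₀ : B) (w₀ : C) (U : E →L[ℝ] A) (V : E →L[ℝ] B) (W : E →L[ℝ] C)

noncomputable def cub : E → ℝ := fun x => t (u₀ + U x) (v₀ + V x) (w₀ + W x)

noncomputable def cubD1 (x : E) : E →L[ℝ] ℝ :=
  precompCLM U (flipCLM A C (t.flip (v₀ + V x)) (w₀ + W x))
  + (precompCLM V (flipCLM B C (t (u₀ + U x)) (w₀ + W x))
  + precompCLM W ((t (u₀ + U x)) (v₀ + V x)))

lemma cubD1_apply (x δ : E) :
    cubD1 t u₀ v₀ w₀ U V W x δ =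
      t (U δ) (v₀ + V x) (w₀ + W x) + (t (u₀ + U x) (V δ) (w₀ + W x)
        + t (u₀ + U x) (v₀ + V x) (W δ)) := rfl

lemma hasFDerivAt_cub (x : E) :
    HasFDerivAt (cub t u₀ v₀ w₀ U V W) (cubD1 t u₀ v₀ w₀ U V W x) x := by
  have hv : HasFDerivAt (fun y : E => v₀ + V y) V x := (V.hasFDerivAt (x := x)).const_add v₀
  have hw : HasFDerivAt (fun y : E => w₀ + W y) W x := (W.hasFDerivAt (x := x)).const_add w₀
  have h1 : HasFDerivAt (fun y : E => t (u₀ + U y)) (t.comp U) x :=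
    clm_affine (G := B →L[ℝ] C →L[ℝ] ℝ) t u₀ U x
  have h12 := h1.clm_apply hv
  have hfull := h12.clm_apply hw
  refine hfull.congr_fderiv ?_
  ext δ
  rw [cubD1_apply]
  simp
  ring

noncomputable def cubD2 (x : E) : E →L[ℝ] (E →L[ℝ] ℝ) :=
  (precompCLM U).comp
      (((flipCLM A C) (t.flip (v₀ + V x))).comp W
        + ((((flipCLM A C).comp t.flip).comp V).flip (w₀ + W x)))
  + ((precompCLM V).comp
      (((flipCLM B C) (t (u₀ + U x))).comp W
        + ((((flipCLM B C).comp t).comp U).flip (w₀ + W x)))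
  + (precompCLM W).comp
      (((t (u₀ + U x)).comp V) + ((t.comp U).flip (v₀ + V x))))

lemma cubD2_apply (x Δ δ : E) :
    cubD2 t u₀ v₀ w₀ U V W x Δ δ =
      (t (U δ) (v₀ + V x) (W Δ) + t (U δ) (V Δ) (w₀ + W x))
      + ((t (u₀ + U x) (V δ) (W Δ) + t (U Δ) (V δ) (w₀ + W x))
      + (t (u₀ + U x) (V Δ) (W δ) + t (U Δ) (v₀ + V x) (W δ))) := by
  simp only [cubD2, ContinuousLinearMap.add_apply, ContinuousLinearMap.comp_apply,
    ContinuousLinearMap.flip_apply, flipCLM_apply, precompCLM_apply, map_add]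

lemma hasFDerivAt_cubD1 (x : E) :
    HasFDerivAt (fun y => cubD1 t u₀ v₀ w₀ U V W y) (cubD2 t u₀ v₀ w₀ U V W x) x := by
  have hu : HasFDerivAt (fun y : E => u₀ + U y) U x := (U.hasFDerivAt (x := x)).const_add u₀
  have hv : HasFDerivAt (fun y : E => v₀ + V y) V x := (V.hasFDerivAt (x := x)).const_add v₀
  have hw : HasFDerivAt (fun y : E => w₀ + W y) W x := (W.hasFDerivAt (x := x)).const_add w₀
  have hc1 : HasFDerivAt (fun y : E => ((flipCLM A C).comp t.flip) (v₀ + V y))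
      (((flipCLM A C).comp t.flip).comp V) x :=
    clm_affine (G := C →L[ℝ] (A →L[ℝ] ℝ)) ((flipCLM A C).comp t.flip) v₀ V x
  have h1 : HasFDerivAt
      (fun y : E => precompCLM U (((flipCLM A C).comp t.flip) (v₀ + V y) (w₀ + W y)))
      ((precompCLM U).comp ((((flipCLM A C).comp t.flip) (v₀ + V x)).comp W
        + ((((flipCLM A C).comp t.flip).comp V).flip (w₀ + W x)))) x := by
    have h := ((precompCLM U).hasFDerivAt
      (x := ((flipCLM A C).comp t.flip) (v₀ + V x) (w₀ + W x))).comp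
      x (hc1.clm_apply hw)
    simpa [Function.comp_def] using h
  have hc2 : HasFDerivAt (fun y : E => ((flipCLM B C).comp t) (u₀ + U y))
      (((flipCLM B C).comp t).comp U) x :=
    clm_affine (G := C →L[ℝ] (B →L[ℝ] ℝ)) ((flipCLM B C).comp t) u₀ U x
  have h2 : HasFDerivAt
      (fun y : E => precompCLM V (((flipCLM B C).comp t) (u₀ + U y) (w₀ + W y)))
      ((precompCLM V).comp ((((flipCLM B C).comp t) (u₀ + U x)).comp W
        + ((((flipCLM B C).comp t).comp U).flip (w₀ + W x)))) x := by
    have h := ((precompCLM V).hasFDerivAt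
      (x := ((flipCLM B C).comp t) (u₀ + U x) (w₀ + W x))).comp
      x (hc2.clm_apply hw)
    simpa [Function.comp_def] using h
  have hc3 : HasFDerivAt (fun y : E => t (u₀ + U y)) (t.comp U) x :=
    clm_affine (G := B →L[ℝ] C →L[ℝ] ℝ) t u₀ U x
  have h3 : HasFDerivAt (fun y : E => precompCLM W ((t (u₀ + U y)) (v₀ + V y)))
      ((precompCLM W).comp (((t (u₀ + U x)).comp V) + ((t.comp U).flip (v₀ + V x)))) x := by
    have h := ((precompCLM W).hasFDerivAt (x := (t (u₀ + U x)) (v₀ + V x))).comp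
      x (hc3.clm_apply hv)
    simpa [Function.comp_def] using h
  exact (h1.add (h2.add h3))

end Master

noncomputable def mkTri {A B C : Type*}
    [NormedAddCommGroup A] [NormedSpace ℝ A] [FiniteDimensional ℝ A]
    [NormedAddCommGroup B] [NormedSpace ℝ B] [FiniteDimensional ℝ B]
    [NormedAddCommGroup C] [NormedSpace ℝ C] [FiniteDimensional ℝ C]
    (t : A → B → C → ℝ)
    (ha1 : ∀ a a' b c, t (a + a') b c = t a b c + t a' b c)
    (ha2 : ∀ (r : ℝ) a b c, t (r • a) b c = r * t a b c)
    (hb1 : ∀ a b b' c, t a (b + b') c = t a b c + t a b' c)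
    (hb2 : ∀ (r : ℝ) a b c, t a (r • b) c = r * t a b c)
    (hc1 : ∀ a b c c', t a b (c + c') = t a b c + t a b c')
    (hc2 : ∀ (r : ℝ) a b c, t a b (r • c) = r * t a b c) :
    A →L[ℝ] B →L[ℝ] C →L[ℝ] ℝ :=
  LinearMap.toContinuousLinearMap
    { toFun := fun a => LinearMap.toContinuousLinearMap
        { toFun := fun b => LinearMap.toContinuousLinearMap
            { toFun := fun c => t a b c
              map_add' := hc1 a b
              map_smul' := fun r c => by simp [hc2] }
          map_add' := fun b b' => by ext c; simp [hb1]
          map_smul' := fun r b => by ext c; simp [hb2] }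
      map_add' := fun a a' => by ext b c; simp [ha1]
      map_smul' := fun r a => by ext b c; simp [ha2] }

@[simp] lemma mkTri_apply {A B C : Type*}
    [NormedAddCommGroup A] [NormedSpace ℝ A] [FiniteDimensional ℝ A]
    [NormedAddCommGroup B] [NormedSpace ℝ B] [FiniteDimensional ℝ B]
    [NormedAddCommGroup C] [NormedSpace ℝ C] [FiniteDimensional ℝ C]
    (t : A → B → C → ℝ) (ha1) (ha2) (hb1) (hb2) (hc1) (hc2) (a : A) (b : B) (c : C) :
    mkTri t ha1 ha2 hb1 hb2 hc1 hc2 a b c = t a b c := rfl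

noncomputable def triMat {a b : ℕ} (r : ℝ) (Amat : Matrix (Fin a) (Fin b) ℝ) :
    (Fin a → ℝ) →L[ℝ] (Fin b → ℝ) →L[ℝ] ℝ →L[ℝ] ℝ :=
  mkTri (fun x y c => c * (r * (x ⬝ᵥ Amat.mulVec y)))
    (by intro x x' y c; simp [add_dotProduct]; ring)
    (by intro s x y c; simp [smul_dotProduct, smul_eq_mul]; ring)
    (by intro x y y' c; simp [Matrix.mulVec_add, dotProduct_add]; ring)
    (by intro s x y c; simp [Matrix.mulVec_smul, dotProduct_smul, smul_eq_mul]; ring)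
    (by intro x y c c'; ring)
    (by intro s x y c; simp [smul_eq_mul]; ring)

@[simp] lemma triMat_apply {a b : ℕ} (r : ℝ) (Amat : Matrix (Fin a) (Fin b) ℝ)
    (x : Fin a → ℝ) (y : Fin b → ℝ) (c : ℝ) :
    triMat r Amat x y c = c * (r * (x ⬝ᵥ Amat.mulVec y)) := rfl

noncomputable def triVec {a : ℕ} (v : Fin a → ℝ) :
    (Fin a → ℝ) →L[ℝ] ℝ →L[ℝ] ℝ →L[ℝ] ℝ :=
  mkTri (fun x c c' => c * c' * (x ⬝ᵥ v))
    (by intro x x' c c'; simp [add_dotProduct]; ring)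
    (by intro s x c c'; simp [smul_dotProduct, smul_eq_mul]; ring)
    (by intro x c c' c''; ring)
    (by intro s x c c'; simp [smul_eq_mul]; ring)
    (by intro x c c' c''; ring)
    (by intro s x c c'; simp [smul_eq_mul]; ring)

@[simp] lemma triVec_apply {a : ℕ} (v : Fin a → ℝ) (x : Fin a → ℝ) (c c' : ℝ) :
    triVec v x c c' = c * c' * (x ⬝ᵥ v) := rfl

noncomputable def triHessL {j d' : ℕ} (r : ℝ)
    (W : (Fin j → ℝ) → Matrix (Fin d') (Fin d') ℝ)
    (ha : ∀ y y' z, (W (y + y')).mulVec z = (W y).mulVec z + (W y').mulVec z)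
    (hs : ∀ (c : ℝ) y z, (W (c • y)).mulVec z = c • (W y).mulVec z) :
    (Fin j → ℝ) →L[ℝ] (Fin d' → ℝ) →L[ℝ] (Fin d' → ℝ) →L[ℝ] ℝ :=
  mkTri (fun a b c => r * (b ⬝ᵥ (W a).mulVec c))
    (by intro x x' y c; simp [ha, dotProduct_add]; ring)
    (by intro s x y c; simp [hs, dotProduct_smul, smul_eq_mul]; ring)
    (by intro x y y' c; simp [add_dotProduct]; ring)
    (by intro s x y c; simp [smul_dotProduct, smul_eq_mul]; ring)
    (by intro x y c c'; simp [Matrix.mulVec_add, dotProduct_add]; ring)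
    (by intro s x y c; simp [Matrix.mulVec_smul, dotProduct_smul, smul_eq_mul]; ring)

@[simp] lemma triHessL_apply {j d' : ℕ} (r : ℝ)
    (W : (Fin j → ℝ) → Matrix (Fin d') (Fin d') ℝ) (ha) (hs)
    (x : Fin j → ℝ) (y z : Fin d' → ℝ) :
    triHessL r W ha hs x y z = r * (y ⬝ᵥ (W x).mulVec z) := rfl

noncomputable def triHessR {j d' a' : ℕ} (r : ℝ) (Nmat : Matrix (Fin a') (Fin d') ℝ)
    (W : (Fin j → ℝ) → Matrix (Fin d') (Fin d') ℝ)
    (ha : ∀ y y' z, (W (y + y')).mulVec z = (W y).mulVec z + (W y').mulVec z)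
    (hs : ∀ (c : ℝ) y z, (W (c • y)).mulVec z = c • (W y).mulVec z) :
    (Fin a' → ℝ) →L[ℝ] (Fin j → ℝ) →L[ℝ] (Fin d' → ℝ) →L[ℝ] ℝ :=
  mkTri (fun a b c => r * (a ⬝ᵥ Nmat.mulVec ((W b).mulVec c)))
    (by intro x x' y c; simp [add_dotProduct]; ring)
    (by intro s x y c; simp [smul_dotProduct, smul_eq_mul]; ring)
    (by intro x y y' c; simp [ha, Matrix.mulVec_add, dotProduct_add]; ring)
    (by intro s x y c; simp [hs, Matrix.mulVec_smul, dotProduct_smul, smul_eq_mul]; ring)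
    (by intro x y c c'; simp [Matrix.mulVec_add, dotProduct_add]; ring)
    (by intro s x y c; simp [Matrix.mulVec_smul, dotProduct_smul, smul_eq_mul]; ring)

@[simp] lemma triHessR_apply {j d' a' : ℕ} (r : ℝ) (Nmat : Matrix (Fin a') (Fin d') ℝ)
    (W : (Fin j → ℝ) → Matrix (Fin d') (Fin d') ℝ) (ha) (hs)
    (x : Fin a' → ℝ) (y : Fin j → ℝ) (z : Fin d' → ℝ) :
    triHessR r Nmat W ha hs x y z = r * (x ⬝ᵥ Nmat.mulVec ((W y).mulVec z)) := rfl

abbrev Xsp (d k m n : ℕ) : Type :=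
  (Fin d → ℝ) × (Fin k → ℝ) × (Fin k → ℝ) × (Fin k → ℝ) × (Fin n → ℝ) × (Fin m → ℝ)

section Proj
variable (d k m n : ℕ)

noncomputable def PQ : Xsp d k m n →L[ℝ] (Fin d → ℝ) := ContinuousLinearMap.fst ℝ _ _
noncomputable def PE : Xsp d k m n →L[ℝ] (Fin k → ℝ) :=
  (ContinuousLinearMap.fst ℝ _ _).comp (ContinuousLinearMap.snd ℝ _ _)
noncomputable def PS : Xsp d k m n →L[ℝ] (Fin k → ℝ) :=
  (ContinuousLinearMap.fst ℝ _ _).comp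
    ((ContinuousLinearMap.snd ℝ _ _).comp (ContinuousLinearMap.snd ℝ _ _))
noncomputable def PL : Xsp d k m n →L[ℝ] (Fin k → ℝ) :=
  (ContinuousLinearMap.fst ℝ _ _).comp ((ContinuousLinearMap.snd ℝ _ _).comp
    ((ContinuousLinearMap.snd ℝ _ _).comp (ContinuousLinearMap.snd ℝ _ _)))
noncomputable def PM : Xsp d k m n →L[ℝ] (Fin n → ℝ) :=
  (ContinuousLinearMap.fst ℝ _ _).comp ((ContinuousLinearMap.snd ℝ _ _).comp
    ((ContinuousLinearMap.snd ℝ _ _).comp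
      ((ContinuousLinearMap.snd ℝ _ _).comp (ContinuousLinearMap.snd ℝ _ _))))
noncomputable def PN : Xsp d k m n →L[ℝ] (Fin m → ℝ) :=
  (ContinuousLinearMap.snd ℝ _ _).comp ((ContinuousLinearMap.snd ℝ _ _).comp
    ((ContinuousLinearMap.snd ℝ _ _).comp
      ((ContinuousLinearMap.snd ℝ _ _).comp (ContinuousLinearMap.snd ℝ _ _))))

variable {d k m n}

@[simp] lemma PQ_apply (x : Xsp d k m n) : PQ d k m n x = x.1 := rfl
@[simp] lemma PE_apply (x : Xsp d k m n) : PE d k m n x = x.2.1 := rfl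
@[simp] lemma PS_apply (x : Xsp d k m n) : PS d k m n x = x.2.2.1 := rfl
@[simp] lemma PL_apply (x : Xsp d k m n) : PL d k m n x = x.2.2.2.1 := rfl
@[simp] lemma PM_apply (x : Xsp d k m n) : PM d k m n x = x.2.2.2.2.1 := rfl
@[simp] lemma PN_apply (x : Xsp d k m n) : PN d k m n x = x.2.2.2.2.2 := rfl

end Proj

/-- The second Fréchet derivative of the fixNLP Lagrangian (for quadratic
`e` and `g`, i.e. affine Jacobians `B` and `G`) is the bilinear form of the
symmetric KKT block matrix `S_fix`. -/
theorem fixNLP_KKT_matrix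
    (d k m n : ℕ) (hd : 0 < d) (hk : 0 < k) (hm : 0 < m) (hn : 0 < n)
    (e : (Fin d → ℝ) → Fin k → ℝ) (g : (Fin d → ℝ) → Fin m → ℝ)
    (B : (Fin d → ℝ) → Matrix (Fin k) (Fin d) ℝ)
    (hB : ∀ p, HasFDerivAt e (matCLM (B p)) p)
    (G : (Fin d → ℝ) → Matrix (Fin m) (Fin d) ℝ)
    (hG : ∀ p, HasFDerivAt g (matCLM (G p)) p)
    -- `e` and `g` are quadratic: the Jacobians `B` and `G` are affine in `q`,
    -- with constant derivatives `U₂`, `U₁` resp. `V`: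
    (U₂ : (Fin k → ℝ) → Matrix (Fin d) (Fin d) ℝ)
    (hU₂ : ∀ (sv : Fin k → ℝ) (p : Fin d → ℝ),
      HasFDerivAt (fun p' => (B p')ᵀ.mulVec sv) (matCLM (U₂ sv)) p)
    (U₁ : (Fin d → ℝ) → Matrix (Fin k) (Fin d) ℝ)
    (hU₁ : ∀ (av : Fin d → ℝ) (p : Fin d → ℝ),
      HasFDerivAt (fun p' => (B p').mulVec av) (matCLM (U₁ av)) p)
    (V : (Fin m → ℝ) → Matrix (Fin d) (Fin d) ℝ)
    (hV : ∀ (nv : Fin m → ℝ) (p : Fin d → ℝ),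
      HasFDerivAt (fun p' => (G p')ᵀ.mulVec nv) (matCLM (V nv)) p)
    (C Cinv : Matrix (Fin k) (Fin k) ℝ)
    (hC : C.PosDef) (hCinv : C * Cinv = 1)
    (Δt : ℝ) (hΔt : 0 < Δt)
    (M : Matrix (Fin d) (Fin d) ℝ)
    (qim1 qi : Fin d → ℝ)
    (etil stil : Fin k → ℝ)
    (N₀ : Matrix (Fin d) (Fin n) ℝ)
    (bminus fbar : Fin d → ℝ)
    (f : (Fin d → ℝ) → (Fin k → ℝ) → Fin n → ℝ)
    (hf : ∀ p sv, f p sv =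
      N₀ᵀ.mulVec ((1 / Δt) • M.mulVec (p - (2 : ℝ) • qi + qim1)
        + (Δt / 2) • (bminus + (B ((1 / 2 : ℝ) • (qi + p)))ᵀ.mulVec sv)
        - (Δt / 2) • fbar))
    (F : (Fin k → ℝ) → Matrix (Fin n) (Fin d) ℝ)
    (hF : ∀ sv, F sv = N₀ᵀ * ((1 / Δt) • M + (Δt / 4) • U₂ sv))
    (L : (Fin d → ℝ) × (Fin k → ℝ) × (Fin k → ℝ) × (Fin k → ℝ) ×
      (Fin n → ℝ) × (Fin m → ℝ) → ℝ)
    (hL : ∀ x : (Fin d → ℝ) × (Fin k → ℝ) × (Fin k → ℝ) × (Fin k → ℝ) ×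
        (Fin n → ℝ) × (Fin m → ℝ),
      L x = (1 / 2 : ℝ) * ((x.2.1 - etil) ⬝ᵥ C.mulVec (x.2.1 - etil))
        + (1 / 2 : ℝ) * ((x.2.2.1 - stil) ⬝ᵥ Cinv.mulVec (x.2.2.1 - stil))
        + x.2.2.2.1 ⬝ᵥ (x.2.1 - e ((1 / 2 : ℝ) • (qi + x.1)))
        + x.2.2.2.2.1 ⬝ᵥ f x.1 x.2.2.1
        + x.2.2.2.2.2 ⬝ᵥ g x.1)
    (q : Fin d → ℝ) (ep s lam : Fin k → ℝ) (mu : Fin n → ℝ) (nu : Fin m → ℝ)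
    (Δq δq : Fin d → ℝ) (Δe Δs Δlam δe δs δlam : Fin k → ℝ)
    (Δmu δmu : Fin n → ℝ) (Δnu δnu : Fin m → ℝ) :
    fderiv ℝ (fderiv ℝ L) (q, ep, s, lam, mu, nu)
        (Δq, Δe, Δs, Δlam, Δmu, Δnu) (δq, δe, δs, δlam, δmu, δnu) =
      -- row q
      δq ⬝ᵥ ((-(1 / 4 : ℝ)) • U₂ lam + V nu).mulVec Δq
        + δq ⬝ᵥ ((Δt / 4) • (U₁ (N₀.mulVec mu))ᵀ).mulVec Δs
        + δq ⬝ᵥ ((-(1 / 2 : ℝ)) • (B ((1 / 2 : ℝ) • (qi + q)))ᵀ).mulVec Δlam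
        + δq ⬝ᵥ (F s)ᵀ.mulVec Δmu
        + δq ⬝ᵥ (G q)ᵀ.mulVec Δnu
      -- row e
        + δe ⬝ᵥ C.mulVec Δe
        + δe ⬝ᵥ Δlam
      -- row s
        + δs ⬝ᵥ ((Δt / 4) • U₁ (N₀.mulVec mu)).mulVec Δq
        + δs ⬝ᵥ Cinv.mulVec Δs
        + δs ⬝ᵥ ((Δt / 2) • (B ((1 / 2 : ℝ) • (qi + q)) * N₀)).mulVec Δmu
      -- row λ
        + δlam ⬝ᵥ ((-(1 / 2 : ℝ)) • B ((1 / 2 : ℝ) • (qi + q))).mulVec Δq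
        + δlam ⬝ᵥ Δe
      -- row μ
        + δmu ⬝ᵥ (F s).mulVec Δq
        + δmu ⬝ᵥ ((Δt / 2) • (N₀ᵀ * (B ((1 / 2 : ℝ) • (qi + q)))ᵀ)).mulVec Δs
      -- row ν
        + δnu ⬝ᵥ (G q).mulVec Δq := by
  classical
  have hU₂a : ∀ (y y' : Fin k → ℝ) (z : Fin d → ℝ),
      (U₂ (y + y')).mulVec z = (U₂ y).mulVec z + (U₂ y').mulVec z := by
    intro y y' z
    have h1 := hU₂ (y + y') 0
    have h2 : HasFDerivAt (fun p' => (B p')ᵀ.mulVec (y + y'))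
        (matCLM (U₂ y) + matCLM (U₂ y')) 0 := by
      have := (hU₂ y 0).add (hU₂ y' 0)
      refine this.congr_of_eventuallyEq (Filter.Eventually.of_forall fun p => ?_)
      simp [Matrix.mulVec_add]
    have h3 := h1.unique h2
    have h4 := congrFun (congrArg DFunLike.coe h3) z
    simpa using h4
  have hU₂s : ∀ (c : ℝ) (y : Fin k → ℝ) (z : Fin d → ℝ),
      (U₂ (c • y)).mulVec z = c • (U₂ y).mulVec z := by
    intro c y z
    have h1 := hU₂ (c • y) 0
    have h2 : HasFDerivAt (fun p' => (B p')ᵀ.mulVec (c • y)) (c • matCLM (U₂ y)) 0 := by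
      have := (hU₂ y 0).const_smul c
      refine this.congr_of_eventuallyEq (Filter.Eventually.of_forall fun p => ?_)
      simp [Matrix.mulVec_smul]
    have h3 := h1.unique h2
    have h4 := congrFun (congrArg DFunLike.coe h3) z
    simpa using h4
  have hVa : ∀ (y y' : Fin m → ℝ) (z : Fin d → ℝ),
      (V (y + y')).mulVec z = (V y).mulVec z + (V y').mulVec z := by
    intro y y' z
    have h1 := hV (y + y') 0
    have h2 : HasFDerivAt (fun p' => (G p')ᵀ.mulVec (y + y'))
        (matCLM (V y) + matCLM (V y')) 0 := by
      have := (hV y 0).add (hV y' 0)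
      refine this.congr_of_eventuallyEq (Filter.Eventually.of_forall fun p => ?_)
      simp [Matrix.mulVec_add]
    have h3 := h1.unique h2
    have h4 := congrFun (congrArg DFunLike.coe h3) z
    simpa using h4
  have hVs : ∀ (c : ℝ) (y : Fin m → ℝ) (z : Fin d → ℝ),
      (V (c • y)).mulVec z = c • (V y).mulVec z := by
    intro c y z
    have h1 := hV (c • y) 0
    have h2 : HasFDerivAt (fun p' => (G p')ᵀ.mulVec (c • y)) (c • matCLM (V y)) 0 := by
      have := (hV y 0).const_smul c
      refine this.congr_of_eventuallyEq (Filter.Eventually.of_forall fun p => ?_)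
      simp [Matrix.mulVec_smul]
    have h3 := h1.unique h2
    have h4 := congrFun (congrArg DFunLike.coe h3) z
    simpa using h4
  have hBexp : ∀ (sv : Fin k → ℝ) (p : Fin d → ℝ),
      (B p)ᵀ.mulVec sv = (B 0)ᵀ.mulVec sv + (U₂ sv).mulVec p := by
    intro sv p
    exact affine_of_const_fderiv (fun p => hU₂ sv p) p
  have hGexp : ∀ (nv : Fin m → ℝ) (p : Fin d → ℝ),
      (G p)ᵀ.mulVec nv = (G 0)ᵀ.mulVec nv + (V nv).mulVec p := by
    intro nv p
    exact affine_of_const_fderiv (fun p => hV nv p) p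
  have hBe : ∀ (lv : Fin k → ℝ) (p : Fin d → ℝ),
      HasFDerivAt (fun p' => lv ⬝ᵥ e p')
        (dotCLM2 d ((B 0)ᵀ.mulVec lv + (U₂ lv).mulVec p)) p := by
    intro lv p
    have h := ((dotCLM2 k lv).hasFDerivAt (x := e p)).comp p (hB p)
    have heq : (dotCLM2 k lv).comp (matCLM (B p))
        = dotCLM2 d ((B 0)ᵀ.mulVec lv + (U₂ lv).mulVec p) := by
      ext w
      simp [← hBexp lv p, tmul_dot]
    rw [heq] at h
    simpa [Function.comp_def] using h
  have hGg : ∀ (nv : Fin m → ℝ) (p : Fin d → ℝ),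
      HasFDerivAt (fun p' => nv ⬝ᵥ g p')
        (dotCLM2 d ((G 0)ᵀ.mulVec nv + (V nv).mulVec p)) p := by
    intro nv p
    have h := ((dotCLM2 m nv).hasFDerivAt (x := g p)).comp p (hG p)
    have heq : (dotCLM2 m nv).comp (matCLM (G p))
        = dotCLM2 d ((G 0)ᵀ.mulVec nv + (V nv).mulVec p) := by
      ext w
      simp [← hGexp nv p, tmul_dot]
    rw [heq] at h
    simpa [Function.comp_def] using h
  have he : ∀ (lv : Fin k → ℝ) (p : Fin d → ℝ),
      lv ⬝ᵥ e p = lv ⬝ᵥ e 0 + (((B 0)ᵀ.mulVec lv) ⬝ᵥ p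
        + (1 / 2) * (p ⬝ᵥ (U₂ lv).mulVec p)) :=
    fun lv p => quad_scalar (hBe lv) p
  have hgq : ∀ (nv : Fin m → ℝ) (p : Fin d → ℝ),
      nv ⬝ᵥ g p = nv ⬝ᵥ g 0 + (((G 0)ᵀ.mulVec nv) ⬝ᵥ p
        + (1 / 2) * (p ⬝ᵥ (V nv).mulVec p)) :=
    fun nv p => quad_scalar (hGg nv) p
  have hU₂sym : ∀ (lv : Fin k → ℝ) (v w : Fin d → ℝ),
      v ⬝ᵥ (U₂ lv).mulVec w = w ⬝ᵥ (U₂ lv).mulVec v := by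
    intro lv v w
    have h := symm_scalar (hBe lv) w v
    rw [dotProduct_comm ((U₂ lv).mulVec w) v, dotProduct_comm ((U₂ lv).mulVec v) w] at h
    exact h
  have hVsym : ∀ (nv : Fin m → ℝ) (v w : Fin d → ℝ),
      v ⬝ᵥ (V nv).mulVec w = w ⬝ᵥ (V nv).mulVec v := by
    intro nv v w
    have h := symm_scalar (hGg nv) w v
    rw [dotProduct_comm ((V nv).mulVec w) v, dotProduct_comm ((V nv).mulVec v) w] at h
    exact h
  have hU12 : ∀ (av : Fin d → ℝ) (xv : Fin k → ℝ) (yv : Fin d → ℝ),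
      xv ⬝ᵥ (U₁ av).mulVec yv = av ⬝ᵥ (U₂ xv).mulVec yv := by
    intro av xv yv
    have h1 := ((dotCLM2 k xv).hasFDerivAt (x := (B 0).mulVec av)).comp 0 (hU₁ av 0)
    have h2 := ((dotCLM2 d av).hasFDerivAt (x := (B 0)ᵀ.mulVec xv)).comp 0 (hU₂ xv 0)
    have hfuneq : (fun p' => xv ⬝ᵥ (B p').mulVec av)
        = (fun p' => av ⬝ᵥ (B p')ᵀ.mulVec xv) := by
      funext p'
      rw [dot_tmul, dotProduct_comm]
    have h1' : HasFDerivAt (fun p' => xv ⬝ᵥ (B p').mulVec av)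
        ((dotCLM2 k xv).comp (matCLM (U₁ av))) 0 := by
      simpa [Function.comp_def] using h1
    have h2' : HasFDerivAt (fun p' => xv ⬝ᵥ (B p').mulVec av)
        ((dotCLM2 d av).comp (matCLM (U₂ xv))) 0 := by
      rw [hfuneq]
      simpa [Function.comp_def] using h2
    have h3 := h1'.unique h2'
    have h4 := congrFun (congrArg DFunLike.coe h3) yv
    simpa using h4
  have hCt : Cᵀ = C := by
    have h0 := hC.1
    ext i j
    have h := congrFun (congrFun h0 i) j
    simpa [Matrix.conjTranspose_apply] using h
  have hCsym : ∀ (v w : Fin k → ℝ), v ⬝ᵥ C.mulVec w = w ⬝ᵥ C.mulVec v := by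
    intro v w
    rw [← tmul_dot C v w, hCt, dotProduct_comm]
  have hCinvt : Cinvᵀ = Cinv := by
    have hCi : Cinv = C⁻¹ := (Matrix.inv_eq_right_inv hCinv).symm
    rw [hCi, Matrix.transpose_nonsing_inv, hCt]
  have hCinvsym : ∀ (v w : Fin k → ℝ), v ⬝ᵥ Cinv.mulVec w = w ⬝ᵥ Cinv.mulVec v := by
    intro v w
    rw [← tmul_dot Cinv v w, hCinvt, dotProduct_comm]
  have hBdot : ∀ (p : Fin d → ℝ) (w : Fin k → ℝ) (v : Fin d → ℝ),
      w ⬝ᵥ (B p).mulVec v = w ⬝ᵥ (B 0).mulVec v + v ⬝ᵥ (U₂ w).mulVec p := by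
    intro p w v
    rw [← tmul_dot (B p) w v, hBexp w p, add_dotProduct, tmul_dot,
      dotProduct_comm ((U₂ w).mulVec p) v]
  have hGdot : ∀ (p : Fin d → ℝ) (w : Fin m → ℝ) (v : Fin d → ℝ),
      w ⬝ᵥ (G p).mulVec v = w ⬝ᵥ (G 0).mulVec v + v ⬝ᵥ (V w).mulVec p := by
    intro p w v
    rw [← tmul_dot (G p) w v, hGexp w p, add_dotProduct, tmul_dot,
      dotProduct_comm ((V w).mulVec p) v]
  have hBdot' : ∀ (w : Fin k → ℝ) (v : Fin d → ℝ),
      w ⬝ᵥ (B ((1 / 2 : ℝ) • (qi + q))).mulVec v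
        = w ⬝ᵥ (B 0).mulVec v + v ⬝ᵥ (U₂ w).mulVec ((1 / 2 : ℝ) • (qi + q)) :=
    fun w v => hBdot _ w v
  have hGdot' : ∀ (w : Fin m → ℝ) (v : Fin d → ℝ),
      w ⬝ᵥ (G q).mulVec v = w ⬝ᵥ (G 0).mulVec v + v ⬝ᵥ (V w).mulVec q :=
    fun w v => hGdot q w v
  have hBdot'' : ∀ (w : Fin k → ℝ) (v : Fin d → ℝ),
      w ⬝ᵥ (B ((1 / 2 : ℝ) • qi + (1 / 2 : ℝ) • q)).mulVec v
        = w ⬝ᵥ (B 0).mulVec v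
          + v ⬝ᵥ (U₂ w).mulVec ((1 / 2 : ℝ) • qi + (1 / 2 : ℝ) • q) :=
    fun w v => hBdot _ w v
  have hLdecomp : L = fun x : Xsp d k m n =>
      cub (triMat ((1 : ℝ)/2) C) (-etil) (-etil) (1 : ℝ) (PE d k m n) (PE d k m n) (0 : Xsp d k m n →L[ℝ] ℝ) x
      + (cub (triMat ((1 : ℝ)/2) Cinv) (-stil) (-stil) (1 : ℝ) (PS d k m n) (PS d k m n) (0 : Xsp d k m n →L[ℝ] ℝ) x
      + (cub (triMat (1 : ℝ) (1 : Matrix (Fin k) (Fin k) ℝ)) 0 0 (1 : ℝ) (PL d k m n) (PE d k m n) (0 : Xsp d k m n →L[ℝ] ℝ) x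
      + (cub (triVec (-(e 0))) 0 (1 : ℝ) (1 : ℝ) (PL d k m n) (0 : Xsp d k m n →L[ℝ] ℝ) (0 : Xsp d k m n →L[ℝ] ℝ) x
      + (cub (triMat (-1 : ℝ) (B 0)) 0 ((1/2 : ℝ) • qi) (1 : ℝ) (PL d k m n) ((1/2 : ℝ) • PQ d k m n) (0 : Xsp d k m n →L[ℝ] ℝ) x
      + (cub (triHessL (-(1/2 : ℝ)) U₂ hU₂a hU₂s) 0 ((1/2 : ℝ) • qi) ((1/2 : ℝ) • qi) (PL d k m n) ((1/2 : ℝ) • PQ d k m n) ((1/2 : ℝ) • PQ d k m n) x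
      + (cub (triMat (1 : ℝ) (N₀ᵀ * ((1/Δt) • M))) 0 (qim1 - (2 : ℝ) • qi) (1 : ℝ) (PM d k m n) (PQ d k m n) (0 : Xsp d k m n →L[ℝ] ℝ) x
      + (cub (triVec ((Δt/2) • (N₀ᵀ.mulVec (bminus - fbar)))) 0 (1 : ℝ) (1 : ℝ) (PM d k m n) (0 : Xsp d k m n →L[ℝ] ℝ) (0 : Xsp d k m n →L[ℝ] ℝ) x
      + (cub (triMat (Δt/2) (N₀ᵀ * (B 0)ᵀ)) 0 0 (1 : ℝ) (PM d k m n) (PS d k m n) (0 : Xsp d k m n →L[ℝ] ℝ) x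
      + (cub (triHessR (Δt/2) N₀ᵀ U₂ hU₂a hU₂s) 0 0 ((1/2 : ℝ) • qi) (PM d k m n) (PS d k m n) ((1/2 : ℝ) • PQ d k m n) x
      + (cub (triVec (g 0)) 0 (1 : ℝ) (1 : ℝ) (PN d k m n) (0 : Xsp d k m n →L[ℝ] ℝ) (0 : Xsp d k m n →L[ℝ] ℝ) x
      + (cub (triMat (1 : ℝ) (G 0)) 0 0 (1 : ℝ) (PN d k m n) (PQ d k m n) (0 : Xsp d k m n →L[ℝ] ℝ) x
      + (cub (triHessL ((1/2 : ℝ)) V hVa hVs) 0 0 0 (PN d k m n) (PQ d k m n) (PQ d k m n) x)))))))))))) := by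
    funext x
    obtain ⟨xq, xe, xs, xl, xm, xn⟩ := x
    rw [hL, hf]
    simp only [cub]
    rw [show xl ⬝ᵥ (xe - e ((1 / 2 : ℝ) • (qi + xq)))
        = xl ⬝ᵥ xe - xl ⬝ᵥ e ((1 / 2 : ℝ) • (qi + xq)) from dotProduct_sub _ _ _,
      he xl ((1 / 2 : ℝ) • (qi + xq)), hgq xn xq, hBexp xs ((1 / 2 : ℝ) • (qi + xq))]
    simp only [triMat_apply, triVec_apply, triHessL_apply, triHessR_apply,
      ContinuousLinearMap.add_apply, ContinuousLinearMap.coe_smul', Pi.smul_apply,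
      ContinuousLinearMap.zero_apply, PQ_apply, PE_apply, PS_apply, PL_apply, PM_apply,
      PN_apply, add_zero, zero_add, smul_add,
      Matrix.mulVec_add, Matrix.add_mulVec, Matrix.mulVec_smul, Matrix.smul_mulVec,
      Matrix.mulVec_sub, Matrix.sub_mulVec, Matrix.mulVec_zero, Matrix.zero_mulVec,
      Matrix.one_mulVec, ← Matrix.mulVec_mulVec,
      dotProduct_add, add_dotProduct, dotProduct_sub, sub_dotProduct,
      dotProduct_smul, smul_dotProduct, dotProduct_zero, zero_dotProduct,
      dotProduct_neg, neg_dotProduct, Matrix.mulVec_neg, Matrix.neg_mulVec,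
      dot_tmul, tmul_dot,
      smul_eq_mul, hU₂a, hU₂s, hVa, hVs]
    ring
  have HL : ∀ x : Xsp d k m n, HasFDerivAt L
      (cubD1 (triMat ((1 : ℝ)/2) C) (-etil) (-etil) (1 : ℝ) (PE d k m n) (PE d k m n) (0 : Xsp d k m n →L[ℝ] ℝ) x
      + (cubD1 (triMat ((1 : ℝ)/2) Cinv) (-stil) (-stil) (1 : ℝ) (PS d k m n) (PS d k m n) (0 : Xsp d k m n →L[ℝ] ℝ) x
      + (cubD1 (triMat (1 : ℝ) (1 : Matrix (Fin k) (Fin k) ℝ)) 0 0 (1 : ℝ) (PL d k m n) (PE d k m n) (0 : Xsp d k m n →L[ℝ] ℝ) x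
      + (cubD1 (triVec (-(e 0))) 0 (1 : ℝ) (1 : ℝ) (PL d k m n) (0 : Xsp d k m n →L[ℝ] ℝ) (0 : Xsp d k m n →L[ℝ] ℝ) x
      + (cubD1 (triMat (-1 : ℝ) (B 0)) 0 ((1/2 : ℝ) • qi) (1 : ℝ) (PL d k m n) ((1/2 : ℝ) • PQ d k m n) (0 : Xsp d k m n →L[ℝ] ℝ) x
      + (cubD1 (triHessL (-(1/2 : ℝ)) U₂ hU₂a hU₂s) 0 ((1/2 : ℝ) • qi) ((1/2 : ℝ) • qi) (PL d k m n) ((1/2 : ℝ) • PQ d k m n) ((1/2 : ℝ) • PQ d k m n) x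
      + (cubD1 (triMat (1 : ℝ) (N₀ᵀ * ((1/Δt) • M))) 0 (qim1 - (2 : ℝ) • qi) (1 : ℝ) (PM d k m n) (PQ d k m n) (0 : Xsp d k m n →L[ℝ] ℝ) x
      + (cubD1 (triVec ((Δt/2) • (N₀ᵀ.mulVec (bminus - fbar)))) 0 (1 : ℝ) (1 : ℝ) (PM d k m n) (0 : Xsp d k m n →L[ℝ] ℝ) (0 : Xsp d k m n →L[ℝ] ℝ) x
      + (cubD1 (triMat (Δt/2) (N₀ᵀ * (B 0)ᵀ)) 0 0 (1 : ℝ) (PM d k m n) (PS d k m n) (0 : Xsp d k m n →L[ℝ] ℝ) x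
      + (cubD1 (triHessR (Δt/2) N₀ᵀ U₂ hU₂a hU₂s) 0 0 ((1/2 : ℝ) • qi) (PM d k m n) (PS d k m n) ((1/2 : ℝ) • PQ d k m n) x
      + (cubD1 (triVec (g 0)) 0 (1 : ℝ) (1 : ℝ) (PN d k m n) (0 : Xsp d k m n →L[ℝ] ℝ) (0 : Xsp d k m n →L[ℝ] ℝ) x
      + (cubD1 (triMat (1 : ℝ) (G 0)) 0 0 (1 : ℝ) (PN d k m n) (PQ d k m n) (0 : Xsp d k m n →L[ℝ] ℝ) x
      + (cubD1 (triHessL ((1/2 : ℝ)) V hVa hVs) 0 0 0 (PN d k m n) (PQ d k m n) (PQ d k m n) x))))))))))))) x := by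
    intro x
    rw [hLdecomp]
    exact (hasFDerivAt_cub (triMat ((1 : ℝ)/2) C) (-etil) (-etil) (1 : ℝ) (PE d k m n) (PE d k m n) (0 : Xsp d k m n →L[ℝ] ℝ) x).add
      ((hasFDerivAt_cub (triMat ((1 : ℝ)/2) Cinv) (-stil) (-stil) (1 : ℝ) (PS d k m n) (PS d k m n) (0 : Xsp d k m n →L[ℝ] ℝ) x).add
      ((hasFDerivAt_cub (triMat (1 : ℝ) (1 : Matrix (Fin k) (Fin k) ℝ)) 0 0 (1 : ℝ) (PL d k m n) (PE d k m n) (0 : Xsp d k m n →L[ℝ] ℝ) x).add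
      ((hasFDerivAt_cub (triVec (-(e 0))) 0 (1 : ℝ) (1 : ℝ) (PL d k m n) (0 : Xsp d k m n →L[ℝ] ℝ) (0 : Xsp d k m n →L[ℝ] ℝ) x).add
      ((hasFDerivAt_cub (triMat (-1 : ℝ) (B 0)) 0 ((1/2 : ℝ) • qi) (1 : ℝ) (PL d k m n) ((1/2 : ℝ) • PQ d k m n) (0 : Xsp d k m n →L[ℝ] ℝ) x).add
      ((hasFDerivAt_cub (triHessL (-(1/2 : ℝ)) U₂ hU₂a hU₂s) 0 ((1/2 : ℝ) • qi) ((1/2 : ℝ) • qi) (PL d k m n) ((1/2 : ℝ) • PQ d k m n) ((1/2 : ℝ) • PQ d k m n) x).add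
      ((hasFDerivAt_cub (triMat (1 : ℝ) (N₀ᵀ * ((1/Δt) • M))) 0 (qim1 - (2 : ℝ) • qi) (1 : ℝ) (PM d k m n) (PQ d k m n) (0 : Xsp d k m n →L[ℝ] ℝ) x).add
      ((hasFDerivAt_cub (triVec ((Δt/2) • (N₀ᵀ.mulVec (bminus - fbar)))) 0 (1 : ℝ) (1 : ℝ) (PM d k m n) (0 : Xsp d k m n →L[ℝ] ℝ) (0 : Xsp d k m n →L[ℝ] ℝ) x).add
      ((hasFDerivAt_cub (triMat (Δt/2) (N₀ᵀ * (B 0)ᵀ)) 0 0 (1 : ℝ) (PM d k m n) (PS d k m n) (0 : Xsp d k m n →L[ℝ] ℝ) x).add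
      ((hasFDerivAt_cub (triHessR (Δt/2) N₀ᵀ U₂ hU₂a hU₂s) 0 0 ((1/2 : ℝ) • qi) (PM d k m n) (PS d k m n) ((1/2 : ℝ) • PQ d k m n) x).add
      ((hasFDerivAt_cub (triVec (g 0)) 0 (1 : ℝ) (1 : ℝ) (PN d k m n) (0 : Xsp d k m n →L[ℝ] ℝ) (0 : Xsp d k m n →L[ℝ] ℝ) x).add
      ((hasFDerivAt_cub (triMat (1 : ℝ) (G 0)) 0 0 (1 : ℝ) (PN d k m n) (PQ d k m n) (0 : Xsp d k m n →L[ℝ] ℝ) x).add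
      ((hasFDerivAt_cub (triHessL ((1/2 : ℝ)) V hVa hVs) 0 0 0 (PN d k m n) (PQ d k m n) (PQ d k m n) x)))))))))))))
  have hfderivL : fderiv ℝ L = fun x : Xsp d k m n =>
      cubD1 (triMat ((1 : ℝ)/2) C) (-etil) (-etil) (1 : ℝ) (PE d k m n) (PE d k m n) (0 : Xsp d k m n →L[ℝ] ℝ) x
      + (cubD1 (triMat ((1 : ℝ)/2) Cinv) (-stil) (-stil) (1 : ℝ) (PS d k m n) (PS d k m n) (0 : Xsp d k m n →L[ℝ] ℝ) x
      + (cubD1 (triMat (1 : ℝ) (1 : Matrix (Fin k) (Fin k) ℝ)) 0 0 (1 : ℝ) (PL d k m n) (PE d k m n) (0 : Xsp d k m n →L[ℝ] ℝ) x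
      + (cubD1 (triVec (-(e 0))) 0 (1 : ℝ) (1 : ℝ) (PL d k m n) (0 : Xsp d k m n →L[ℝ] ℝ) (0 : Xsp d k m n →L[ℝ] ℝ) x
      + (cubD1 (triMat (-1 : ℝ) (B 0)) 0 ((1/2 : ℝ) • qi) (1 : ℝ) (PL d k m n) ((1/2 : ℝ) • PQ d k m n) (0 : Xsp d k m n →L[ℝ] ℝ) x
      + (cubD1 (triHessL (-(1/2 : ℝ)) U₂ hU₂a hU₂s) 0 ((1/2 : ℝ) • qi) ((1/2 : ℝ) • qi) (PL d k m n) ((1/2 : ℝ) • PQ d k m n) ((1/2 : ℝ) • PQ d k m n) x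
      + (cubD1 (triMat (1 : ℝ) (N₀ᵀ * ((1/Δt) • M))) 0 (qim1 - (2 : ℝ) • qi) (1 : ℝ) (PM d k m n) (PQ d k m n) (0 : Xsp d k m n →L[ℝ] ℝ) x
      + (cubD1 (triVec ((Δt/2) • (N₀ᵀ.mulVec (bminus - fbar)))) 0 (1 : ℝ) (1 : ℝ) (PM d k m n) (0 : Xsp d k m n →L[ℝ] ℝ) (0 : Xsp d k m n →L[ℝ] ℝ) x
      + (cubD1 (triMat (Δt/2) (N₀ᵀ * (B 0)ᵀ)) 0 0 (1 : ℝ) (PM d k m n) (PS d k m n) (0 : Xsp d k m n →L[ℝ] ℝ) x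
      + (cubD1 (triHessR (Δt/2) N₀ᵀ U₂ hU₂a hU₂s) 0 0 ((1/2 : ℝ) • qi) (PM d k m n) (PS d k m n) ((1/2 : ℝ) • PQ d k m n) x
      + (cubD1 (triVec (g 0)) 0 (1 : ℝ) (1 : ℝ) (PN d k m n) (0 : Xsp d k m n →L[ℝ] ℝ) (0 : Xsp d k m n →L[ℝ] ℝ) x
      + (cubD1 (triMat (1 : ℝ) (G 0)) 0 0 (1 : ℝ) (PN d k m n) (PQ d k m n) (0 : Xsp d k m n →L[ℝ] ℝ) x
      + (cubD1 (triHessL ((1/2 : ℝ)) V hVa hVs) 0 0 0 (PN d k m n) (PQ d k m n) (PQ d k m n) x)))))))))))) :=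
    funext fun x => (HL x).fderiv
  set x₀ : Xsp d k m n := (q, ep, s, lam, mu, nu) with hx₀
  have H2 : HasFDerivAt (fun x : Xsp d k m n =>
      cubD1 (triMat ((1 : ℝ)/2) C) (-etil) (-etil) (1 : ℝ) (PE d k m n) (PE d k m n) (0 : Xsp d k m n →L[ℝ] ℝ) x
      + (cubD1 (triMat ((1 : ℝ)/2) Cinv) (-stil) (-stil) (1 : ℝ) (PS d k m n) (PS d k m n) (0 : Xsp d k m n →L[ℝ] ℝ) x
      + (cubD1 (triMat (1 : ℝ) (1 : Matrix (Fin k) (Fin k) ℝ)) 0 0 (1 : ℝ) (PL d k m n) (PE d k m n) (0 : Xsp d k m n →L[ℝ] ℝ) x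
      + (cubD1 (triVec (-(e 0))) 0 (1 : ℝ) (1 : ℝ) (PL d k m n) (0 : Xsp d k m n →L[ℝ] ℝ) (0 : Xsp d k m n →L[ℝ] ℝ) x
      + (cubD1 (triMat (-1 : ℝ) (B 0)) 0 ((1/2 : ℝ) • qi) (1 : ℝ) (PL d k m n) ((1/2 : ℝ) • PQ d k m n) (0 : Xsp d k m n →L[ℝ] ℝ) x
      + (cubD1 (triHessL (-(1/2 : ℝ)) U₂ hU₂a hU₂s) 0 ((1/2 : ℝ) • qi) ((1/2 : ℝ) • qi) (PL d k m n) ((1/2 : ℝ) • PQ d k m n) ((1/2 : ℝ) • PQ d k m n) x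
      + (cubD1 (triMat (1 : ℝ) (N₀ᵀ * ((1/Δt) • M))) 0 (qim1 - (2 : ℝ) • qi) (1 : ℝ) (PM d k m n) (PQ d k m n) (0 : Xsp d k m n →L[ℝ] ℝ) x
      + (cubD1 (triVec ((Δt/2) • (N₀ᵀ.mulVec (bminus - fbar)))) 0 (1 : ℝ) (1 : ℝ) (PM d k m n) (0 : Xsp d k m n →L[ℝ] ℝ) (0 : Xsp d k m n →L[ℝ] ℝ) x
      + (cubD1 (triMat (Δt/2) (N₀ᵀ * (B 0)ᵀ)) 0 0 (1 : ℝ) (PM d k m n) (PS d k m n) (0 : Xsp d k m n →L[ℝ] ℝ) x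
      + (cubD1 (triHessR (Δt/2) N₀ᵀ U₂ hU₂a hU₂s) 0 0 ((1/2 : ℝ) • qi) (PM d k m n) (PS d k m n) ((1/2 : ℝ) • PQ d k m n) x
      + (cubD1 (triVec (g 0)) 0 (1 : ℝ) (1 : ℝ) (PN d k m n) (0 : Xsp d k m n →L[ℝ] ℝ) (0 : Xsp d k m n →L[ℝ] ℝ) x
      + (cubD1 (triMat (1 : ℝ) (G 0)) 0 0 (1 : ℝ) (PN d k m n) (PQ d k m n) (0 : Xsp d k m n →L[ℝ] ℝ) x
      + (cubD1 (triHessL ((1/2 : ℝ)) V hVa hVs) 0 0 0 (PN d k m n) (PQ d k m n) (PQ d k m n) x)))))))))))))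
      (cubD2 (triMat ((1 : ℝ)/2) C) (-etil) (-etil) (1 : ℝ) (PE d k m n) (PE d k m n) (0 : Xsp d k m n →L[ℝ] ℝ) x₀
      + (cubD2 (triMat ((1 : ℝ)/2) Cinv) (-stil) (-stil) (1 : ℝ) (PS d k m n) (PS d k m n) (0 : Xsp d k m n →L[ℝ] ℝ) x₀
      + (cubD2 (triMat (1 : ℝ) (1 : Matrix (Fin k) (Fin k) ℝ)) 0 0 (1 : ℝ) (PL d k m n) (PE d k m n) (0 : Xsp d k m n →L[ℝ] ℝ) x₀
      + (cubD2 (triVec (-(e 0))) 0 (1 : ℝ) (1 : ℝ) (PL d k m n) (0 : Xsp d k m n →L[ℝ] ℝ) (0 : Xsp d k m n →L[ℝ] ℝ) x₀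
      + (cubD2 (triMat (-1 : ℝ) (B 0)) 0 ((1/2 : ℝ) • qi) (1 : ℝ) (PL d k m n) ((1/2 : ℝ) • PQ d k m n) (0 : Xsp d k m n →L[ℝ] ℝ) x₀
      + (cubD2 (triHessL (-(1/2 : ℝ)) U₂ hU₂a hU₂s) 0 ((1/2 : ℝ) • qi) ((1/2 : ℝ) • qi) (PL d k m n) ((1/2 : ℝ) • PQ d k m n) ((1/2 : ℝ) • PQ d k m n) x₀
      + (cubD2 (triMat (1 : ℝ) (N₀ᵀ * ((1/Δt) • M))) 0 (qim1 - (2 : ℝ) • qi) (1 : ℝ) (PM d k m n) (PQ d k m n) (0 : Xsp d k m n →L[ℝ] ℝ) x₀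
      + (cubD2 (triVec ((Δt/2) • (N₀ᵀ.mulVec (bminus - fbar)))) 0 (1 : ℝ) (1 : ℝ) (PM d k m n) (0 : Xsp d k m n →L[ℝ] ℝ) (0 : Xsp d k m n →L[ℝ] ℝ) x₀
      + (cubD2 (triMat (Δt/2) (N₀ᵀ * (B 0)ᵀ)) 0 0 (1 : ℝ) (PM d k m n) (PS d k m n) (0 : Xsp d k m n →L[ℝ] ℝ) x₀
      + (cubD2 (triHessR (Δt/2) N₀ᵀ U₂ hU₂a hU₂s) 0 0 ((1/2 : ℝ) • qi) (PM d k m n) (PS d k m n) ((1/2 : ℝ) • PQ d k m n) x₀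
      + (cubD2 (triVec (g 0)) 0 (1 : ℝ) (1 : ℝ) (PN d k m n) (0 : Xsp d k m n →L[ℝ] ℝ) (0 : Xsp d k m n →L[ℝ] ℝ) x₀
      + (cubD2 (triMat (1 : ℝ) (G 0)) 0 0 (1 : ℝ) (PN d k m n) (PQ d k m n) (0 : Xsp d k m n →L[ℝ] ℝ) x₀
      + (cubD2 (triHessL ((1/2 : ℝ)) V hVa hVs) 0 0 0 (PN d k m n) (PQ d k m n) (PQ d k m n) x₀))))))))))))) x₀ :=
    (hasFDerivAt_cubD1 (triMat ((1 : ℝ)/2) C) (-etil) (-etil) (1 : ℝ) (PE d k m n) (PE d k m n) (0 : Xsp d k m n →L[ℝ] ℝ) x₀).add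
      ((hasFDerivAt_cubD1 (triMat ((1 : ℝ)/2) Cinv) (-stil) (-stil) (1 : ℝ) (PS d k m n) (PS d k m n) (0 : Xsp d k m n →L[ℝ] ℝ) x₀).add
      ((hasFDerivAt_cubD1 (triMat (1 : ℝ) (1 : Matrix (Fin k) (Fin k) ℝ)) 0 0 (1 : ℝ) (PL d k m n) (PE d k m n) (0 : Xsp d k m n →L[ℝ] ℝ) x₀).add
      ((hasFDerivAt_cubD1 (triVec (-(e 0))) 0 (1 : ℝ) (1 : ℝ) (PL d k m n) (0 : Xsp d k m n →L[ℝ] ℝ) (0 : Xsp d k m n →L[ℝ] ℝ) x₀).add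
      ((hasFDerivAt_cubD1 (triMat (-1 : ℝ) (B 0)) 0 ((1/2 : ℝ) • qi) (1 : ℝ) (PL d k m n) ((1/2 : ℝ) • PQ d k m n) (0 : Xsp d k m n →L[ℝ] ℝ) x₀).add
      ((hasFDerivAt_cubD1 (triHessL (-(1/2 : ℝ)) U₂ hU₂a hU₂s) 0 ((1/2 : ℝ) • qi) ((1/2 : ℝ) • qi) (PL d k m n) ((1/2 : ℝ) • PQ d k m n) ((1/2 : ℝ) • PQ d k m n) x₀).add
      ((hasFDerivAt_cubD1 (triMat (1 : ℝ) (N₀ᵀ * ((1/Δt) • M))) 0 (qim1 - (2 : ℝ) • qi) (1 : ℝ) (PM d k m n) (PQ d k m n) (0 : Xsp d k m n →L[ℝ] ℝ) x₀).add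
      ((hasFDerivAt_cubD1 (triVec ((Δt/2) • (N₀ᵀ.mulVec (bminus - fbar)))) 0 (1 : ℝ) (1 : ℝ) (PM d k m n) (0 : Xsp d k m n →L[ℝ] ℝ) (0 : Xsp d k m n →L[ℝ] ℝ) x₀).add
      ((hasFDerivAt_cubD1 (triMat (Δt/2) (N₀ᵀ * (B 0)ᵀ)) 0 0 (1 : ℝ) (PM d k m n) (PS d k m n) (0 : Xsp d k m n →L[ℝ] ℝ) x₀).add
      ((hasFDerivAt_cubD1 (triHessR (Δt/2) N₀ᵀ U₂ hU₂a hU₂s) 0 0 ((1/2 : ℝ) • qi) (PM d k m n) (PS d k m n) ((1/2 : ℝ) • PQ d k m n) x₀).add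
      ((hasFDerivAt_cubD1 (triVec (g 0)) 0 (1 : ℝ) (1 : ℝ) (PN d k m n) (0 : Xsp d k m n →L[ℝ] ℝ) (0 : Xsp d k m n →L[ℝ] ℝ) x₀).add
      ((hasFDerivAt_cubD1 (triMat (1 : ℝ) (G 0)) 0 0 (1 : ℝ) (PN d k m n) (PQ d k m n) (0 : Xsp d k m n →L[ℝ] ℝ) x₀).add
      ((hasFDerivAt_cubD1 (triHessL ((1/2 : ℝ)) V hVa hVs) 0 0 0 (PN d k m n) (PQ d k m n) (PQ d k m n) x₀)))))))))))))
  have hkey : fderiv ℝ (fderiv ℝ L) x₀ =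
      (cubD2 (triMat ((1 : ℝ)/2) C) (-etil) (-etil) (1 : ℝ) (PE d k m n) (PE d k m n) (0 : Xsp d k m n →L[ℝ] ℝ) x₀
      + (cubD2 (triMat ((1 : ℝ)/2) Cinv) (-stil) (-stil) (1 : ℝ) (PS d k m n) (PS d k m n) (0 : Xsp d k m n →L[ℝ] ℝ) x₀
      + (cubD2 (triMat (1 : ℝ) (1 : Matrix (Fin k) (Fin k) ℝ)) 0 0 (1 : ℝ) (PL d k m n) (PE d k m n) (0 : Xsp d k m n →L[ℝ] ℝ) x₀
      + (cubD2 (triVec (-(e 0))) 0 (1 : ℝ) (1 : ℝ) (PL d k m n) (0 : Xsp d k m n →L[ℝ] ℝ) (0 : Xsp d k m n →L[ℝ] ℝ) x₀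
      + (cubD2 (triMat (-1 : ℝ) (B 0)) 0 ((1/2 : ℝ) • qi) (1 : ℝ) (PL d k m n) ((1/2 : ℝ) • PQ d k m n) (0 : Xsp d k m n →L[ℝ] ℝ) x₀
      + (cubD2 (triHessL (-(1/2 : ℝ)) U₂ hU₂a hU₂s) 0 ((1/2 : ℝ) • qi) ((1/2 : ℝ) • qi) (PL d k m n) ((1/2 : ℝ) • PQ d k m n) ((1/2 : ℝ) • PQ d k m n) x₀
      + (cubD2 (triMat (1 : ℝ) (N₀ᵀ * ((1/Δt) • M))) 0 (qim1 - (2 : ℝ) • qi) (1 : ℝ) (PM d k m n) (PQ d k m n) (0 : Xsp d k m n →L[ℝ] ℝ) x₀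
      + (cubD2 (triVec ((Δt/2) • (N₀ᵀ.mulVec (bminus - fbar)))) 0 (1 : ℝ) (1 : ℝ) (PM d k m n) (0 : Xsp d k m n →L[ℝ] ℝ) (0 : Xsp d k m n →L[ℝ] ℝ) x₀
      + (cubD2 (triMat (Δt/2) (N₀ᵀ * (B 0)ᵀ)) 0 0 (1 : ℝ) (PM d k m n) (PS d k m n) (0 : Xsp d k m n →L[ℝ] ℝ) x₀
      + (cubD2 (triHessR (Δt/2) N₀ᵀ U₂ hU₂a hU₂s) 0 0 ((1/2 : ℝ) • qi) (PM d k m n) (PS d k m n) ((1/2 : ℝ) • PQ d k m n) x₀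
      + (cubD2 (triVec (g 0)) 0 (1 : ℝ) (1 : ℝ) (PN d k m n) (0 : Xsp d k m n →L[ℝ] ℝ) (0 : Xsp d k m n →L[ℝ] ℝ) x₀
      + (cubD2 (triMat (1 : ℝ) (G 0)) 0 0 (1 : ℝ) (PN d k m n) (PQ d k m n) (0 : Xsp d k m n →L[ℝ] ℝ) x₀
      + (cubD2 (triHessL ((1/2 : ℝ)) V hVa hVs) 0 0 0 (PN d k m n) (PQ d k m n) (PQ d k m n) x₀))))))))))))) := by
    rw [hfderivL]
    exact H2.fderiv
  show fderiv ℝ (fderiv ℝ L) x₀ (Δq, Δe, Δs, Δlam, Δmu, Δnu)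
    (δq, δe, δs, δlam, δmu, δnu) = _
  rw [hkey]
  simp only [ContinuousLinearMap.add_apply]
  simp only [cubD2_apply]
  simp only [triMat_apply, triVec_apply, triHessL_apply, triHessR_apply]
  simp only [ContinuousLinearMap.coe_smul', Pi.smul_apply, ContinuousLinearMap.zero_apply,
    PQ_apply, PE_apply, PS_apply, PL_apply, PM_apply, PN_apply]
  rw [hF]
  simp only [Matrix.transpose_mul, Matrix.transpose_smul, Matrix.transpose_add,
    Matrix.transpose_transpose, Matrix.smul_mulVec, ← Matrix.mulVec_mulVec,
    Matrix.add_mulVec, Matrix.mulVec_add, Matrix.mulVec_smul,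
    Matrix.mulVec_zero, Matrix.zero_mulVec, Matrix.one_mulVec, add_zero, zero_add, smul_add,
    dotProduct_add, add_dotProduct, dotProduct_smul, smul_dotProduct,
    dotProduct_zero, zero_dotProduct, dotProduct_neg, neg_dotProduct,
    Matrix.mulVec_neg, Matrix.neg_mulVec,
    dot_tmul, tmul_dot, smul_eq_mul, hU₂a, hU₂s, hVa, hVs, hBdot', hBdot'', hGdot', hU12]
  linear_combination (norm := ring1)
    dotProduct_comm Δlam δe + (1/2 : ℝ) * hCsym Δe δe + (1/2 : ℝ) * hCinvsym Δs δs
    + (-(1/8) : ℝ) * hU₂sym lam Δq δq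
    + (-(1/8) : ℝ) * hU₂sym δlam qi Δq + (-(1/8) : ℝ) * hU₂sym δlam q Δq
    + (-(1/8) : ℝ) * hU₂sym Δlam qi δq + (-(1/8) : ℝ) * hU₂sym Δlam q δq
    + (1/2 : ℝ) * hVsym nu Δq δq + (1/2 : ℝ) * hVsym δnu q Δq
    + (1/2 : ℝ) * hVsym Δnu q δq
    + (1/Δt) * dotProduct_comm (M.mulVec δq) (N₀.mulVec Δmu)
    + (Δt/4) * dotProduct_comm ((U₂ Δs).mulVec qi) (N₀.mulVec δmu)
    + (Δt/4) * dotProduct_comm ((U₂ Δs).mulVec q) (N₀.mulVec δmu)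
    + (Δt/4) * dotProduct_comm ((U₂ δs).mulVec qi) (N₀.mulVec Δmu)
    + (Δt/4) * dotProduct_comm ((U₂ δs).mulVec q) (N₀.mulVec Δmu)
    + (Δt/4) * dotProduct_comm ((U₂ δs).mulVec Δq) (N₀.mulVec mu)
    + (Δt/4) * dotProduct_comm ((U₂ Δs).mulVec δq) (N₀.mulVec mu)
    + (Δt/4) * dotProduct_comm ((U₂ s).mulVec δq) (N₀.mulVec Δmu)
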